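/- Let 0 < μ < L and μ₀ = L − μ. Let a₀, a₁, … be positive reals with partial sums A_i = Σ_{j=0}^i a_j, and suppose a₀ = 1 and a_k²/(A_k(μ₀ + μA_k)) = 1/L for all k ≥ 1. Then A_k ≥ (1 − √(μ/L))^{−k} for all k ≥ 0. -/
import Mathlib


open Finset

/-- **Growth of the weight sequence, strongly convex case.** Let `0 < μ < L` and
`μ₀ = L - μ`. If `a 0 = 1` and `a k ^ 2 / (A k * (μ₀ + μ * A k)) = 1 / L` for all
`k ≥ 1`, where `A` is the sequence of partial sums of the positive sequence `a`,
then `A k ≥ (1 - √(μ/L))⁻ᵏ` for all `k`. -/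
theorem weight_growth_strongly_convex (L μ : ℝ) (hμ : 0 < μ) (hμL : μ < L)
    (a A : ℕ → ℝ) (ha : ∀ i, 0 < a i)
    (hA : ∀ i, A i = ∑ j ∈ Finset.range (i + 1), a j)
    (ha0 : a 0 = 1)
    (hak : ∀ k, 1 ≤ k → a k ^ 2 / (A k * ((L - μ) + μ * A k)) = 1 / L) :
    ∀ k : ℕ, A k ≥ (1 - Real.sqrt (μ / L)) ^ (-(k : ℤ)) := by
  set q := Real.sqrt (μ / L) with hqdef
  have hL : 0 < L := hμ.trans hμL
  have hq0 : 0 ≤ q := Real.sqrt_nonneg _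
  have hq1 : q < 1 := by
    rw [hqdef, show (1:ℝ) = Real.sqrt 1 by simp]
    exact Real.sqrt_lt_sqrt (by positivity) (by rw [div_lt_one hL]; exact hμL)
  have h1q : 0 < 1 - q := by linarith
  have hApos : ∀ i, 0 < A i := fun i => by
    rw [hA i]; exact Finset.sum_pos (fun j _ => ha j) ⟨0, by simp⟩
  intro k
  induction k with
  | zero => simp [hA 0, ha0]
  | succ k ih =>
    have hrec : A (k + 1) = A k + a (k + 1) := by
      rw [hA (k+1), hA k, Finset.sum_range_succ]
    have hA1 := hApos (k+1)
    have hden : 0 < A (k+1) * ((L - μ) + μ * A (k+1)) := mul_pos hA1 (by nlinarith)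
    have heq : a (k+1) ^ 2 * L = A (k+1) * ((L - μ) + μ * A (k+1)) := by
      have h := hak (k+1) (by omega)
      rw [div_eq_div_iff hden.ne' hL.ne'] at h
      linarith
    have hq2 : q ^ 2 = μ / L := Real.sq_sqrt (by positivity)
    have hge : q ^ 2 * A (k+1) ^ 2 ≤ a (k+1) ^ 2 := by
      rw [hq2, div_mul_eq_mul_div, div_le_iff₀ hL]
      nlinarith
    have hstep : q * A (k+1) ≤ a (k+1) := by
      nlinarith [ha (k+1), mul_nonneg hq0 hA1.le]
    have hle : A k ≤ (1 - q) * A (k+1) := by nlinarith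
    have hz : (1 - q) ^ (-(k:ℤ)) ≤ (1 - q) * A (k+1) := le_trans ih hle
    rw [ge_iff_le, show (-(↑(k+1):ℤ)) = -(k:ℤ) - 1 by push_cast; ring,
        zpow_sub₀ h1q.ne', zpow_one, div_le_iff₀ h1q]
    linarith
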